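/- At every point of U, the backward characteristic derivative of the pressure satisfies p_t − c·p_x = −c²·(u_x + m·z_x + ((γ−1)/γ)·m_x·z); equivalently, α = −(p_t − c·p_x)/c² (Lemma 4.1, forward part). -/

import Mathlib

open Real

/-- Partial derivative with respect to `t` (the first coordinate). -/
noncomputable def pdt (f : ℝ × ℝ → ℝ) (pt : ℝ × ℝ) : ℝ := fderiv ℝ f pt (1, 0)

/-- Partial derivative with respect to `x` (the second coordinate). -/
noncomputable def pdx (f : ℝ × ℝ → ℝ) (pt : ℝ × ℝ) : ℝ := fderiv ℝ f pt (0, 1)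

/-- Lemma 4.1 (forward part): `p‵ = p_t − c·p_x = −c²·α` on `U`. -/
theorem stmt_0 (γ Kc : ℝ) (hγ : 1 < γ) (hKc : 0 < Kc)
    (U : Set (ℝ × ℝ)) (hU : IsOpen U)
    (u z m : ℝ × ℝ → ℝ)
    (hu : ContDiffOn ℝ 2 u U) (hz : ContDiffOn ℝ 2 z U) (hm : ContDiffOn ℝ 2 m U)
    (hzpos : ∀ pt ∈ U, 0 < z pt) (hmpos : ∀ pt ∈ U, 0 < m pt)
    (c p : ℝ × ℝ → ℝ)
    (hc : c = fun pt => Kc * m pt * z pt ^ ((γ + 1) / (γ - 1)))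
    (hp : p = fun pt => ((γ - 1) / (2 * γ) * Kc) * (m pt) ^ 2 * z pt ^ (2 * γ / (γ - 1)))
    (heq1 : ∀ pt ∈ U, pdt z pt + (c pt / m pt) * pdx u pt = 0)
    (heq2 : ∀ pt ∈ U, pdt u pt + m pt * c pt * pdx z pt + 2 * (p pt / m pt) * pdx m pt = 0)
    (heq3 : ∀ pt ∈ U, pdt m pt = 0)
    (α : ℝ × ℝ → ℝ)
    (hα : α = fun pt => pdx u pt + m pt * pdx z pt + ((γ - 1) / γ) * pdx m pt * z pt) :
    ∀ pt ∈ U, pdt p pt - c pt * pdx p pt = -(c pt) ^ 2 * α pt := by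
  intro pt hpt
  have hγ0 : γ ≠ 0 := by linarith
  have hγ1 : γ - 1 ≠ 0 := by linarith
  have hzne : z pt ≠ 0 := (hzpos pt hpt).ne'
  have hmne : m pt ≠ 0 := (hmpos pt hpt).ne'
  have hmem := hU.mem_nhds hpt
  have hzd : DifferentiableAt ℝ z pt :=
    ((hz.differentiableOn two_ne_zero).differentiableAt hmem)
  have hmd : DifferentiableAt ℝ m pt :=
    ((hm.differentiableOn two_ne_zero).differentiableAt hmem)
  set e : ℝ := 2 * γ / (γ - 1) with he
  -- derivative of p
  have h1 : HasFDerivAt (fun q => z q ^ e) ((e * z pt ^ (e - 1)) • fderiv ℝ z pt) pt :=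
    hzd.hasFDerivAt.rpow_const (Or.inl hzne)
  have h2 : HasFDerivAt (fun q => m q ^ 2)
      (m pt • fderiv ℝ m pt + m pt • fderiv ℝ m pt) pt := by
    have := hmd.hasFDerivAt.mul hmd.hasFDerivAt; simp only [pow_two]; exact this
  have h3 : HasFDerivAt (fun q => ((γ - 1) / (2 * γ) * Kc) * m q ^ 2)
      (((γ - 1) / (2 * γ) * Kc) • (m pt • fderiv ℝ m pt + m pt • fderiv ℝ m pt)) pt :=
    h2.const_mul _
  have h4 := h3.mul h1
  have hpd : HasFDerivAt p
      ((((γ - 1) / (2 * γ) * Kc) * m pt ^ 2) • ((e * z pt ^ (e - 1)) • fderiv ℝ z pt)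
        + (z pt ^ e) • (((γ - 1) / (2 * γ) * Kc) • (m pt • fderiv ℝ m pt + m pt • fderiv ℝ m pt))) pt := by
    rw [hp]; exact h4
  have hfp := hpd.fderiv
  have key : ∀ v : ℝ × ℝ, fderiv ℝ p pt v =
      (((γ - 1) / (2 * γ) * Kc) * m pt ^ 2) * (e * z pt ^ (e - 1) * fderiv ℝ z pt v)
        + z pt ^ e * (((γ - 1) / (2 * γ) * Kc) * (2 * m pt * fderiv ℝ m pt v)) := by
    intro v
    rw [hfp]
    simp only [ContinuousLinearMap.add_apply, ContinuousLinearMap.smul_apply, smul_eq_mul]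
    ring
  have hzt := heq1 pt hpt
  have hmt := heq3 pt hpt
  have hEe : (γ + 1) / (γ - 1) = e - 1 := by
    rw [he]; field_simp; ring
  have hze : z pt ^ e = z pt ^ (e - 1) * z pt := by
    have h := Real.rpow_add (hzpos pt hpt) (e - 1) 1
    rw [sub_add_cancel, Real.rpow_one] at h
    exact h
  have hcv : c pt = Kc * m pt * z pt ^ (e - 1) := by rw [hc, hEe]
  unfold pdt pdx at *
  rw [key (1,0), key (0,1), hmt, hα, hcv, hze]
  have hzt' : fderiv ℝ z pt (1, 0) =
      -((Kc * m pt * z pt ^ (e - 1)) / m pt * fderiv ℝ u pt (0, 1)) := by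
    rw [hcv] at hzt; linarith
  rw [hzt', he]
  generalize z pt ^ (2 * γ / (γ - 1) - 1) = A
  field_simp
  ring
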